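/- Let R be a finite ring admitting a two-sided generating character χ, i.e., an additive character χ such that every additive character of R equals x ↦ χ(x*r) for some r ∈ R and also equals x ↦ χ(r'*x) for some r' ∈ R (such R are exactly the finite Frobenius rings). Let ω be a normalized homogeneous weight on R. Then for every b ∈ R and every real number t, ∑_{a ∈ R, ω(a) = t} χ(a*b) = ∑_{a ∈ R, ω(a) = t} χ(b*a). In particular, the left and right Krawtchouk coefficients of the homogeneous weight partition coincide, and hence so do its left and right character-theoretic dual partitions. -/

import Mathlib

/-- The principal left ideal generated by `x`, as a set: `{r * x : r ∈ R}`. -/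
def leftOrbit {R : Type*} [Ring R] (x : R) : Set R := {z | ∃ r : R, z = r * x}

/-- `ω` is a normalized homogeneous weight on the finite ring `R`. -/
def IsNormHomWeight {R : Type*} [Ring R] [Finite R] (ω : R → ℝ) : Prop :=
  ω 0 = 0 ∧
  (∀ x y : R, leftOrbit x = leftOrbit y → ω x = ω y) ∧
  (∀ x : R, x ≠ 0 →
    ∑ y ∈ (Set.toFinite (leftOrbit x)).toFinset, ω y
      = ((Set.toFinite (leftOrbit x)).toFinset.card : ℝ))

section Aux

variable {R : Type*} [Ring R] [Finite R]

lemma aux_addChar_sep {a : R} (ha : a ≠ 0) : ∃ ψ : AddChar R ℂˣ, ψ a ≠ 1 := by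
  obtain ⟨φ, hφ⟩ := CommGroup.exists_apply_ne_one_of_hasEnoughRootsOfUnity
    (Multiplicative R) ℂ (a := Multiplicative.ofAdd a) (by simpa using ha)
  exact ⟨AddChar.toMonoidHomEquiv.symm φ, hφ⟩

omit [Finite R] in
lemma aux_mem_leftOrbit_self (x : R) : x ∈ leftOrbit x := ⟨1, (one_mul x).symm⟩

omit [Finite R] in
lemma aux_leftOrbit_subset {x y : R} (h : y ∈ leftOrbit x) : leftOrbit y ⊆ leftOrbit x := by
  obtain ⟨r, rfl⟩ := h
  rintro z ⟨s, rfl⟩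
  exact ⟨s * r, (mul_assoc s r x).symm⟩

/-- Uniqueness of the normalized homogeneous weight. -/
lemma aux_normHomWeight_unique (ω₁ ω₂ : R → ℝ) (h1 : IsNormHomWeight ω₁)
    (h2 : IsNormHomWeight ω₂) : ω₁ = ω₂ := by
  classical
  have key : ∀ n (x : R), (Set.toFinite (leftOrbit x)).toFinset.card ≤ n → ω₁ x = ω₂ x := by
    intro n
    induction n with
    | zero =>
      intro x hx
      exfalso
      have hxmem : x ∈ (Set.toFinite (leftOrbit x)).toFinset := by
        rw [Set.Finite.mem_toFinset]; exact aux_mem_leftOrbit_self x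
      have := Finset.card_pos.mpr ⟨x, hxmem⟩
      omega
    | succ n ih =>
      intro x hx
      by_cases hx0 : x = 0
      · subst hx0; rw [h1.1, h2.1]
      set F := (Set.toFinite (leftOrbit x)).toFinset with hF
      have hsum1 := h1.2.2 x hx0
      have hsum2 := h2.2.2 x hx0
      have hsmall : ∀ y ∈ F, ¬ (leftOrbit y = leftOrbit x) → ω₁ y = ω₂ y := by
        intro y hy hne
        apply ih
        have hsub : leftOrbit y ⊆ leftOrbit x :=
          aux_leftOrbit_subset (by rwa [hF, Set.Finite.mem_toFinset] at hy)
        have hss : (Set.toFinite (leftOrbit y)).toFinset ⊂ F := by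
          rw [hF, Finset.ssubset_iff_subset_ne]
          constructor
          · rw [Set.Finite.toFinset_subset_toFinset]; exact hsub
          · intro hcontra
            exact hne (by rw [← Set.Finite.toFinset_inj]; exact hcontra)
        have := Finset.card_lt_card hss
        omega
      set S := F.filter (fun y => leftOrbit y = leftOrbit x) with hS
      have hxS : x ∈ S := by
        rw [hS, Finset.mem_filter]
        exact ⟨by rw [hF, Set.Finite.mem_toFinset]; exact aux_mem_leftOrbit_self x, rfl⟩
      have e1 : ∑ y ∈ S, ω₁ y = (S.card : ℝ) * ω₁ x := by
        rw [Finset.sum_congr rfl (fun y hy => h1.2.1 y x (Finset.mem_filter.mp hy).2)]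
        rw [Finset.sum_const, nsmul_eq_mul]
      have e2 : ∑ y ∈ S, ω₂ y = (S.card : ℝ) * ω₂ x := by
        rw [Finset.sum_congr rfl (fun y hy => h2.2.1 y x (Finset.mem_filter.mp hy).2)]
        rw [Finset.sum_const, nsmul_eq_mul]
      have erest : ∑ y ∈ F.filter (fun y => ¬ leftOrbit y = leftOrbit x), ω₁ y
          = ∑ y ∈ F.filter (fun y => ¬ leftOrbit y = leftOrbit x), ω₂ y := by
        refine Finset.sum_congr rfl (fun y hy => ?_)
        obtain ⟨hyF, hyne⟩ := Finset.mem_filter.mp hy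
        exact hsmall y hyF hyne
      have hsplit1 := Finset.sum_filter_add_sum_filter_not F
        (fun y => leftOrbit y = leftOrbit x) ω₁
      have hsplit2 := Finset.sum_filter_add_sum_filter_not F
        (fun y => leftOrbit y = leftOrbit x) ω₂
      have hcard : (S.card : ℝ) * ω₁ x = (S.card : ℝ) * ω₂ x := by
        have : ∑ y ∈ S, ω₁ y = ∑ y ∈ S, ω₂ y := by
          have := hsplit1.trans (hsum1.trans (hsum2.symm.trans hsplit2.symm))
          rw [← hS] at this
          linarith [erest, this]
        rw [← e1, ← e2]; exact this
      have hScard : (S.card : ℝ) ≠ 0 := by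
        have := Finset.card_pos.mpr ⟨x, hxS⟩
        positivity
      exact mul_left_cancel₀ hScard hcard
  funext x
  exact key _ x le_rfl

variable (χ : AddChar R ℂˣ)

lemma aux_inj_right (hr : ∀ ψ : AddChar R ℂˣ, ∃ r' : R, ∀ x : R, ψ x = χ (r' * x))
    {z : R} (h : ∀ y, χ (y * z) = 1) : z = 0 := by
  by_contra h0
  obtain ⟨ψ, hψ⟩ := aux_addChar_sep h0
  obtain ⟨r', hr'⟩ := hr ψ
  exact hψ (by rw [hr' z, h r'])

lemma aux_inj_left (hl : ∀ ψ : AddChar R ℂˣ, ∃ r : R, ∀ x : R, ψ x = χ (x * r))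
    {z : R} (h : ∀ y, χ (z * y) = 1) : z = 0 := by
  by_contra h0
  obtain ⟨ψ, hψ⟩ := aux_addChar_sep h0
  obtain ⟨r, hr'⟩ := hl ψ
  exact hψ (by rw [hr' z, h r])

lemma aux_exists_alpha
    (hl : ∀ ψ : AddChar R ℂˣ, ∃ r : R, ∀ x : R, ψ x = χ (x * r))
    (hr : ∀ ψ : AddChar R ℂˣ, ∃ r' : R, ∀ x : R, ψ x = χ (r' * x)) :
    ∃ α : R → R, Function.Bijective α ∧ (∀ x y, χ (x * y) = χ (y * α x)) ∧
      (∀ x y, α (x * y) = α x * α y) ∧ α 0 = 0 := by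
  have hchar : ∀ x : R, ∃ r : R, ∀ y, χ (x * y) = χ (y * r) := by
    intro x
    obtain ⟨r, hrx⟩ := hl ⟨fun y => χ (x * y),
      by simp only [mul_zero, AddChar.map_zero_eq_one],
      fun a b => by simp only [mul_add, AddChar.map_add_eq_mul]⟩
    exact ⟨r, fun y => hrx y⟩
  choose α hα using hchar
  have uniq : ∀ r r' : R, (∀ y, χ (y * r) = χ (y * r')) → r = r' := by
    intro r r' h
    have hz : r - r' = 0 := by
      apply aux_inj_right χ hr
      intro y
      rw [mul_sub, AddChar.map_sub_eq_div, h y, div_self']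
    exact sub_eq_zero.mp hz
  have hmul : ∀ x y, α (x * y) = α x * α y := by
    intro x y
    apply uniq
    intro z
    rw [← hα (x * y) z, mul_assoc x y z, hα x (y * z), mul_assoc y z (α x), hα y (z * α x), mul_assoc]
  have hzero : α 0 = 0 := by
    apply aux_inj_right χ hr
    intro y
    rw [← hα 0 y, zero_mul, AddChar.map_zero_eq_one]
  have hinj : Function.Injective α := by
    intro x x' h
    have hz : x - x' = 0 := by
      apply aux_inj_left χ hl
      intro y
      rw [sub_mul, AddChar.map_sub_eq_div, hα x y, hα x' y, h, div_self']
    exact sub_eq_zero.mp hz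
  exact ⟨α, Finite.injective_iff_bijective.mp hinj, hα, hmul, hzero⟩

end Aux

theorem homogeneous_weight_krawtchouk_left_eq_right
    {R : Type*} [Ring R] [Finite R]
    (χ : AddChar R ℂˣ)
    (hl : ∀ ψ : AddChar R ℂˣ, ∃ r : R, ∀ x : R, ψ x = χ (x * r))
    (hr : ∀ ψ : AddChar R ℂˣ, ∃ r' : R, ∀ x : R, ψ x = χ (r' * x))
    (ω : R → ℝ) (hω : IsNormHomWeight ω) (b : R) (t : ℝ) :
    ∑ a ∈ (Set.toFinite {a : R | ω a = t}).toFinset, ((χ (a * b) : ℂˣ) : ℂ)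
      = ∑ a ∈ (Set.toFinite {a : R | ω a = t}).toFinset, ((χ (b * a) : ℂˣ) : ℂ) := by
  classical
  obtain ⟨α, hbij, hα, hmul, hzero⟩ := aux_exists_alpha χ hl hr
  -- χ ∘ α = χ
  have hχα : ∀ z, χ (α z) = χ z := by
    intro z
    have := hα z 1
    rwa [mul_one, one_mul, eq_comm] at this
  -- orbit of α x is the α-image of orbit of x
  have horb : ∀ x : R, leftOrbit (α x) = α '' leftOrbit x := by
    intro x
    ext z
    constructor
    · rintro ⟨r, rfl⟩
      obtain ⟨r₀, rfl⟩ := hbij.2 r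
      exact ⟨r₀ * x, ⟨r₀, rfl⟩, hmul r₀ x⟩
    · rintro ⟨w, ⟨r, rfl⟩, rfl⟩
      exact ⟨α r, hmul r x⟩
  have hFin : ∀ x : R, (Set.toFinite (leftOrbit (α x))).toFinset
      = ((Set.toFinite (leftOrbit x)).toFinset).image α := by
    intro x
    ext z
    simp [Set.Finite.mem_toFinset, horb x]
  -- ω ∘ α is a normalized homogeneous weight
  have hωα : IsNormHomWeight (fun z => ω (α z)) := by
    refine ⟨?_, ?_, ?_⟩
    · show ω (α 0) = 0
      rw [hzero, hω.1]
    · intro x y h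
      exact hω.2.1 _ _ (by rw [horb x, horb y, h])
    · intro x hx0
      have hαx0 : α x ≠ 0 := by
        intro h
        exact hx0 (hbij.1 (h.trans hzero.symm))
      have h3 := hω.2.2 (α x) hαx0
      rw [hFin x, Finset.sum_image (fun a _ a' _ h => hbij.1 h),
        Finset.card_image_of_injective _ hbij.1] at h3
      exact h3
  have hωeq : ∀ z, ω (α z) = ω z :=
    fun z => congrFun (aux_normHomWeight_unique _ _ hωα hω) z
  -- rewrite RHS using χ (b * a) = χ (a * α b)
  have hRHS : ∀ a : R, ((χ (b * a) : ℂˣ) : ℂ) = ((χ (a * α b) : ℂˣ) : ℂ) := by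
    intro a; rw [hα b a]
  rw [Finset.sum_congr rfl (fun a _ => hRHS a)]
  -- reindex via α
  set T := (Set.toFinite {a : R | ω a = t}).toFinset with hT
  have hmemT : ∀ a : R, a ∈ T ↔ ω a = t := by
    intro a; rw [hT, Set.Finite.mem_toFinset]; rfl
  set e : R ≃ R := Equiv.ofBijective α hbij with he
  refine Finset.sum_nbij' (i := α) (j := fun a => e.symm a) ?_ ?_ ?_ ?_ ?_
  · intro a ha
    rw [hmemT] at ha ⊢
    rw [hωeq a]; exact ha
  · intro a ha
    rw [hmemT] at ha ⊢
    show ω (e.symm a) = t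
    have h2 : α (e.symm a) = a := e.apply_symm_apply a
    rw [← hωeq (e.symm a), h2]
    exact ha
  · intro a _
    exact e.symm_apply_apply a
  · intro a _
    exact e.apply_symm_apply a
  · intro a _
    rw [← hmul a b, hχα (a * b)]
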